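/- Let C be a nonzero proper F_q-linear code of n×m matrices (n ≤ m) of dimension t with m | t. Then C is dually AMRD if and only if d(C) + d(C^⊥) = n. (Here one uses that when m | t, rdef(C) = 0 implies C is MRD and hence rdef(C^⊥) = 0.) -/

import Mathlib

open Module Matrix

/-- `d` is the minimum rank-metric distance of the set `S` of `n × m` matrices. -/
def MatMinDist {Fq : Type*} [Field Fq] {n m : ℕ}
    (S : Set (Matrix (Fin n) (Fin m) Fq)) (d : ℕ) : Prop :=
  (∃ A ∈ S, A ≠ 0 ∧ A.rank = d) ∧ ∀ A ∈ S, A ≠ 0 → d ≤ A.rank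

/-- The dual of a matrix code with respect to the trace bilinear form
`⟨B, A⟩ = Tr(B Aᵀ)`. -/
def matDual {Fq : Type*} [Field Fq] {n m : ℕ}
    (C : Submodule Fq (Matrix (Fin n) (Fin m) Fq)) : Set (Matrix (Fin n) (Fin m) Fq) :=
  {B | ∀ A ∈ C, Matrix.trace (B * Aᵀ) = 0}

section Aux

variable {Fq : Type*} [Field Fq] {n m : ℕ}

lemma traceForm_apply (B A : Matrix (Fin n) (Fin m) Fq) :
    Matrix.trace (B * Aᵀ) = ∑ i, ∑ j, B i j * A i j := by
  simp [Matrix.trace, Matrix.diag, Matrix.mul_apply]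

lemma traceForm_symm (B A : Matrix (Fin n) (Fin m) Fq) :
    Matrix.trace (B * Aᵀ) = Matrix.trace (A * Bᵀ) := by
  simp_rw [traceForm_apply, mul_comm]

lemma trace_mul_stdBasis (B : Matrix (Fin n) (Fin m) Fq) (i : Fin n) (j : Fin m) :
    Matrix.trace (B * (Matrix.single i j (1 : Fq))ᵀ) = B i j := by
  rw [traceForm_apply]
  rw [Finset.sum_eq_single i]
  · rw [Finset.sum_eq_single j]
    · simp [Matrix.single]
    · intro b _ hb; simp [Matrix.single, hb.symm]
    · simp
  · intro a _ ha
    apply Finset.sum_eq_zero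
    intro b _
    simp [Matrix.single, ha.symm]
  · simp

lemma traceForm_nondeg {B : Matrix (Fin n) (Fin m) Fq}
    (h : ∀ A : Matrix (Fin n) (Fin m) Fq, Matrix.trace (B * Aᵀ) = 0) : B = 0 := by
  ext i j
  have := h (Matrix.single i j 1)
  rw [trace_mul_stdBasis] at this
  simpa using this

lemma matrix_rank_zero {A : Matrix (Fin n) (Fin m) Fq} (h : A.rank = 0) : A = 0 := by
  have h' : LinearMap.range A.mulVecLin = ⊥ := by
    rw [Matrix.rank] at h
    exact Submodule.finrank_eq_zero.mp h
  have h2 : A.mulVecLin = 0 := LinearMap.range_eq_bot.mp h'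
  ext i j
  have h3 : A.mulVec (Pi.single j 1) = 0 := LinearMap.congr_fun h2 (Pi.single j 1)
  have h4 := congrFun h3 i
  simp only [Matrix.mulVec_single, mul_one, Pi.zero_apply] at h4
  simpa using h4

lemma rank_le_of_range_le {A : Matrix (Fin n) (Fin m) Fq} {W : Submodule Fq (Fin n → Fq)}
    (h : ∀ v, A.mulVec v ∈ W) : A.rank ≤ finrank Fq W := by
  refine Submodule.finrank_mono ?_
  rintro x ⟨v, rfl⟩
  exact h v

lemma finrank_ker_funLeft {r : ℕ} (f : Fin r → Fin n) (hf : Function.Injective f) :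
    finrank Fq (LinearMap.ker (LinearMap.funLeft Fq Fq f)) = n - r := by
  have h := LinearMap.finrank_range_add_finrank_ker (LinearMap.funLeft Fq Fq f)
  have hsurj : Function.Surjective (LinearMap.funLeft Fq Fq f) :=
    LinearMap.funLeft_surjective_of_injective Fq Fq f hf
  rw [LinearMap.range_eq_top.mpr hsurj, finrank_top] at h
  simp only [Module.finrank_pi, Fintype.card_fin] at h
  omega

/-- Singleton bound. -/
lemma singleton_bound (C : Submodule Fq (Matrix (Fin n) (Fin m) Fq)) {d : ℕ}
    (hd1 : 1 ≤ d) (hdn : d ≤ n)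
    (hmin : ∀ A ∈ C, A ≠ 0 → d ≤ A.rank) :
    finrank Fq C ≤ (n + 1 - d) * m := by
  have hr : n + 1 - d ≤ n := by omega
  set r := n + 1 - d with hrdef
  let ψ : C →ₗ[Fq] Matrix (Fin r) (Fin m) Fq :=
    { toFun := fun A => Matrix.of fun i j => (A : Matrix (Fin n) (Fin m) Fq) (Fin.castLE hr i) j
      map_add' := by intros; ext i j; simp
      map_smul' := by intros; ext i j; simp }
  have hinj : Function.Injective ψ := by
    rw [injective_iff_map_eq_zero]
    intro A hA
    have hz : ∀ (i : Fin r) (j : Fin m), (A : Matrix (Fin n) (Fin m) Fq) (Fin.castLE hr i) j = 0 := by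
      intro i j
      have := congrFun (congrFun (congrArg (fun M => (M : Matrix (Fin r) (Fin m) Fq)) hA) i) j
      simpa [ψ] using this
    have hrank : (A : Matrix (Fin n) (Fin m) Fq).rank ≤ d - 1 := by
      have hker : ∀ v, (A : Matrix (Fin n) (Fin m) Fq).mulVec v ∈
          LinearMap.ker (LinearMap.funLeft Fq Fq (Fin.castLE hr)) := by
        intro v
        rw [LinearMap.mem_ker]
        funext i
        simp only [LinearMap.funLeft_apply]
        rw [Matrix.mulVec]
        simp [dotProduct, hz i]
      have := rank_le_of_range_le hker
      rwa [finrank_ker_funLeft _ (Fin.castLE_injective hr), hrdef,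
        show n - (n + 1 - d) = d - 1 by omega] at this
    by_contra hA0
    have hA0' : (A : Matrix (Fin n) (Fin m) Fq) ≠ 0 := by
      intro h; exact hA0 (Subtype.ext h)
    have := hmin A A.2 hA0'
    omega
  have := LinearMap.finrank_le_finrank_of_injective hinj
  calc finrank Fq C ≤ finrank Fq (Matrix (Fin r) (Fin m) Fq) := this
    _ = r * m := by
        rw [Module.finrank_matrix]
        simp

/-- the dual as a submodule -/
def dualSub (C : Submodule Fq (Matrix (Fin n) (Fin m) Fq)) :
    Submodule Fq (Matrix (Fin n) (Fin m) Fq) where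
  carrier := matDual C
  add_mem' := by
    intro a b ha hb A hA
    rw [Matrix.add_mul, Matrix.trace_add, ha A hA, hb A hA, add_zero]
  zero_mem' := by intro A hA; simp
  smul_mem' := by
    intro c a ha A hA
    rw [Matrix.smul_mul, Matrix.trace_smul, ha A hA, smul_zero]

lemma mem_dualSub {C : Submodule Fq (Matrix (Fin n) (Fin m) Fq)}
    {B : Matrix (Fin n) (Fin m) Fq} :
    B ∈ dualSub C ↔ ∀ A ∈ C, Matrix.trace (B * Aᵀ) = 0 := Iff.rfl

/-- the trace bilinear form -/
noncomputable def traceBilin : Matrix (Fin n) (Fin m) Fq →ₗ[Fq]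
    Matrix (Fin n) (Fin m) Fq →ₗ[Fq] Fq :=
  LinearMap.mk₂ Fq (fun B A => Matrix.trace (B * Aᵀ))
    (fun B B' A => by rw [Matrix.add_mul, Matrix.trace_add])
    (fun c B A => by rw [Matrix.smul_mul, Matrix.trace_smul])
    (fun B A A' => by rw [Matrix.transpose_add, Matrix.mul_add, Matrix.trace_add])
    (fun c B A => by rw [Matrix.transpose_smul, Matrix.mul_smul, Matrix.trace_smul])

lemma traceBilin_injective :
    Function.Injective (traceBilin : Matrix (Fin n) (Fin m) Fq →ₗ[Fq] _) := by
  rw [injective_iff_map_eq_zero]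
  intro B hB
  apply traceForm_nondeg (Fq := Fq) (B := B)
  intro A
  have := LinearMap.congr_fun hB A
  simpa [traceBilin] using this

lemma finrank_dualSub (C : Submodule Fq (Matrix (Fin n) (Fin m) Fq)) :
    finrank Fq (dualSub C) + finrank Fq C = n * m := by
  classical
  let Φ : Matrix (Fin n) (Fin m) Fq →ₗ[Fq] (C →ₗ[Fq] Fq) :=
    (traceBilin : Matrix (Fin n) (Fin m) Fq →ₗ[Fq] _).compl₂ C.subtype
  have hker : LinearMap.ker Φ = dualSub C := by
    ext B
    simp only [LinearMap.mem_ker, mem_dualSub]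
    constructor
    · intro h A hA
      have := LinearMap.congr_fun h ⟨A, hA⟩
      simpa [Φ, traceBilin, LinearMap.mk₂] using this
    · intro h
      ext ⟨A, hA⟩
      simpa [Φ, traceBilin] using h A hA
  have hβsurj : Function.Surjective
      (traceBilin : Matrix (Fin n) (Fin m) Fq →ₗ[Fq] Module.Dual Fq (Matrix (Fin n) (Fin m) Fq)) := by
    rw [← LinearMap.injective_iff_surjective_of_finrank_eq_finrank
      Subspace.dual_finrank_eq.symm]
    exact traceBilin_injective
  have hΦsurj : Function.Surjective Φ := by
    intro f
    obtain ⟨g, hg⟩ := LinearMap.exists_extend f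
    obtain ⟨B, hB⟩ := hβsurj g
    refine ⟨B, ?_⟩
    ext a
    have : traceBilin B = g := hB
    simp only [Φ, LinearMap.compl₂_apply, this]
    exact LinearMap.congr_fun hg a
  have hrn := LinearMap.finrank_range_add_finrank_ker Φ
  rw [LinearMap.range_eq_top.mpr hΦsurj, finrank_top, hker] at hrn
  have hdual : finrank Fq (C →ₗ[Fq] Fq) = finrank Fq C :=
    Subspace.dual_finrank_eq (V := C)
  rw [hdual] at hrn
  rw [Module.finrank_matrix] at hrn
  simp only [Fintype.card_fin, Module.finrank_self, mul_one] at hrn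
  omega

/-- exists superset submodule of prescribed finrank -/
lemma exists_superset_finrank {V : Type*} [AddCommGroup V] [Module Fq V]
    [FiniteDimensional Fq V] (W : Submodule Fq V) (s : ℕ)
    (h1 : finrank Fq W ≤ s) (h2 : s ≤ finrank Fq V) :
    ∃ W' : Submodule Fq V, W ≤ W' ∧ finrank Fq W' = s := by
  induction s with
  | zero =>
    have : finrank Fq W = 0 := Nat.le_zero.mp h1
    exact ⟨W, le_refl _, this⟩
  | succ s ih =>
    rcases Nat.lt_or_ge (finrank Fq W) (s + 1) with hlt | hge
    · obtain ⟨W', hle, hrk⟩ := ih (by omega) (by omega)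
      have hW'top : W' ≠ ⊤ := by
        intro h
        rw [h, finrank_top] at hrk
        omega
      obtain ⟨x, hx⟩ : ∃ x, x ∉ W' := by
        by_contra h
        push_neg at h
        exact hW'top (Submodule.eq_top_iff'.mpr h)
      refine ⟨W' ⊔ Submodule.span Fq {x}, le_trans hle le_sup_left, ?_⟩
      have hx0 : x ≠ 0 := fun h => hx (h ▸ W'.zero_mem)
      have hinf : W' ⊓ Submodule.span Fq {x} = ⊥ := by
        rw [eq_bot_iff]
        rintro y ⟨hy1, hy2⟩
        obtain ⟨c, rfl⟩ := Submodule.mem_span_singleton.mp hy2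
        rcases eq_or_ne c 0 with rfl | hc
        · simp
        · exact absurd (by simpa [hc] using W'.smul_mem c⁻¹ hy1) hx
      have := Submodule.finrank_sup_add_finrank_inf_eq W' (Submodule.span Fq {x})
      rw [hinf, finrank_bot, finrank_span_singleton hx0, hrk] at this
      omega
    · exact ⟨W, le_refl _, le_antisymm h1 hge⟩

/-- Delsarte-type lemma: if `C` is MRD (dim `s*m`, min rank `n-s+1`), then every
matrix in the trace-dual of `C` with rank `≤ s` is zero. -/
lemma dual_of_MRD (s : ℕ) (hs : s ≤ n) (C : Submodule Fq (Matrix (Fin n) (Fin m) Fq))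
    (hdim : finrank Fq C = s * m)
    (hmin : ∀ A ∈ C, A ≠ 0 → n + 1 - s ≤ A.rank)
    (B : Matrix (Fin n) (Fin m) Fq) (hB : ∀ A ∈ C, Matrix.trace (B * Aᵀ) = 0)
    (hBr : B.rank ≤ s) : B = 0 := by
  classical
  -- superset W of the column space of B with finrank s
  obtain ⟨W, hWle, hWrank⟩ := exists_superset_finrank (LinearMap.range B.mulVecLin) s
    (by rw [← Matrix.rank]; exact hBr)
    (by simpa [Module.finrank_pi] using hs)
  let b : Basis (Fin s) Fq W := Module.finBasisOfFinrankEq Fq W hWrank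
  let P : Matrix (Fin n) (Fin s) Fq := Matrix.of fun i j => ((b j : Fin n → Fq) i)
  have hPdecomp : P.mulVecLin = W.subtype ∘ₗ (b.equivFun.symm : (Fin s → Fq) →ₗ[Fq] W) := by
    refine LinearMap.ext fun v => funext fun i => ?_
    simp only [Matrix.mulVecLin_apply, LinearMap.comp_apply, Submodule.coe_subtype,
      LinearEquiv.coe_coe, Basis.equivFun_symm_apply]
    rw [Matrix.mulVec]
    simp only [dotProduct, P, Matrix.of_apply]
    rw [show ((∑ i : Fin s, v i • b i : W) : Fin n → Fq) = ∑ i : Fin s, v i • (b i : Fin n → Fq)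
      by push_cast; rfl]
    rw [Finset.sum_apply]
    simp [mul_comm]
  have hPrange : LinearMap.range P.mulVecLin = W := by
    rw [hPdecomp, LinearMap.range_comp, LinearEquiv.range, Submodule.map_top,
      Submodule.range_subtype]
  have hPrank : P.rank = s := by rw [Matrix.rank, hPrange, hWrank]
  -- the kernel of Pᵀ has finrank n - s
  have hkerPT : finrank Fq (LinearMap.ker (Pᵀ.mulVecLin)) = n - s := by
    have h := LinearMap.finrank_range_add_finrank_ker (Pᵀ.mulVecLin)
    have : finrank Fq (LinearMap.range (Pᵀ.mulVecLin)) = s := by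
      rw [← Matrix.rank, Matrix.rank_transpose, hPrank]
    rw [this, Module.finrank_pi] at h
    simp only [Fintype.card_fin] at h
    omega
  -- the map A ↦ Pᵀ * A on C is injective hence surjective
  let ψ : C →ₗ[Fq] Matrix (Fin s) (Fin m) Fq :=
    { toFun := fun A => Pᵀ * (A : Matrix (Fin n) (Fin m) Fq)
      map_add' := by intros; simp [Matrix.mul_add]
      map_smul' := by intros; simp [Matrix.mul_smul] }
  have hinj : Function.Injective ψ := by
    rw [injective_iff_map_eq_zero]
    intro A hA
    have hA' : Pᵀ * (A : Matrix (Fin n) (Fin m) Fq) = 0 := hA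
    have hrank : (A : Matrix (Fin n) (Fin m) Fq).rank ≤ n - s := by
      have hker : ∀ v, (A : Matrix (Fin n) (Fin m) Fq).mulVec v ∈
          LinearMap.ker (Pᵀ.mulVecLin) := by
        intro v
        rw [LinearMap.mem_ker, Matrix.mulVecLin_apply, Matrix.mulVec_mulVec, hA',
          Matrix.zero_mulVec]
      have := rank_le_of_range_le hker
      rwa [hkerPT] at this
    by_contra hA0
    have hA0' : (A : Matrix (Fin n) (Fin m) Fq) ≠ 0 := fun h => hA0 (Subtype.ext h)
    have := hmin A A.2 hA0'
    omega
  have hsurj : Function.Surjective ψ := by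
    rw [← LinearMap.injective_iff_surjective_of_finrank_eq_finrank (by
      rw [hdim, Module.finrank_matrix]
      simp)]
    exact hinj
  -- decompose B = P * B'
  have hcolmem : ∀ j, Bᵀ j ∈ W := by
    intro j
    apply hWle
    exact ⟨Pi.single j 1, by rw [Matrix.mulVecLin_apply]; ext i; simp [Matrix.mulVec_single]⟩
  let B' : Matrix (Fin s) (Fin m) Fq := Matrix.of fun i' j => b.repr ⟨Bᵀ j, hcolmem j⟩ i'
  have hPB : P * B' = B := by
    ext i j
    rw [Matrix.mul_apply]
    have hsum := b.sum_repr ⟨Bᵀ j, hcolmem j⟩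
    have := congrArg (fun w : W => (w : Fin n → Fq) i) hsum
    simp only at this
    rw [show ((∑ i' : Fin s, b.repr ⟨Bᵀ j, hcolmem j⟩ i' • b i' : W) : Fin n → Fq)
        = ∑ i' : Fin s, b.repr ⟨Bᵀ j, hcolmem j⟩ i' • (b i' : Fin n → Fq) by push_cast; rfl]
      at this
    rw [Finset.sum_apply] at this
    simp only [Pi.smul_apply, smul_eq_mul] at this
    rw [show B i j = Bᵀ j i from rfl, ← this]
    apply Finset.sum_congr rfl
    intro r _
    simp [P, B', mul_comm]
  -- B' is orthogonal to everything, hence zero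
  have hB'zero : B' = 0 := by
    apply traceForm_nondeg (Fq := Fq)
    intro X
    obtain ⟨⟨A, hA⟩, hXA⟩ := hsurj X
    have hXA' : Pᵀ * A = X := hXA
    have h1 : Matrix.trace (B * Aᵀ) = 0 := hB A hA
    rw [← hPB] at h1
    rw [← hXA', Matrix.transpose_mul, Matrix.transpose_transpose]
    rw [Matrix.mul_assoc, Matrix.trace_mul_comm P (B' * Aᵀ), Matrix.mul_assoc] at h1
    exact h1
  rw [← hPB, hB'zero, Matrix.mul_zero]

end Aux

theorem dually_AMRD_iff_distance_sum
    (Fq : Type*) [Field Fq] [Fintype Fq]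
    (n m t d dp : ℕ) (hnm : n ≤ m) (hmt : m ∣ t)
    (C : Submodule Fq (Matrix (Fin n) (Fin m) Fq)) (hC0 : C ≠ ⊥) (hC1 : C ≠ ⊤)
    (ht : finrank Fq C = t)
    (hd : MatMinDist (C : Set (Matrix (Fin n) (Fin m) Fq)) d)
    (hdp : MatMinDist (matDual C) dp)
    (hMRDfact : d + t / m = n + 1 → dp + (n * m - t) / m = n + 1) :
    (d + t / m = n ∧ dp + (n * m - t) / m = n) ↔ d + dp = n := by
  classical
  have hV : finrank Fq (Matrix (Fin n) (Fin m) Fq) = n * m := by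
    rw [Module.finrank_matrix]; simp
  -- nontriviality of dimensions
  have hn : 0 < n := by
    rcases Nat.eq_zero_or_pos n with rfl | h
    · exfalso
      apply hC0
      rw [eq_bot_iff]
      intro x _
      have : x = 0 := by ext i j; exact absurd i.2 (Nat.not_lt_zero _)
      simpa [this] using Submodule.zero_mem ⊥
    · exact h
  have hm : 0 < m := lt_of_lt_of_le hn hnm
  have htle : t ≤ n * m := by
    rw [← ht, ← hV]; exact Submodule.finrank_le C
  have htne : t ≠ n * m := by
    intro h
    exact hC1 (Submodule.eq_top_of_finrank_eq (by rw [ht, h, hV]))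
  have ht0 : t ≠ 0 := by
    intro h
    exact hC0 (Submodule.finrank_eq_zero.mp (by rw [ht, h]))
  obtain ⟨k, hk⟩ := hmt
  have hkd : t / m = k := by rw [hk]; exact Nat.mul_div_cancel_left k hm
  have hk1 : 1 ≤ k := by
    rcases Nat.eq_zero_or_pos k with rfl | h
    · exact absurd (by omega : t = 0) ht0
    · exact h
  have hkn : k < n := by
    have : m * k < m * n := by
      rw [← hk]
      calc t < n * m := lt_of_le_of_ne htle htne
        _ = m * n := Nat.mul_comm n m
    exact Nat.lt_of_mul_lt_mul_left this
  have hco : (n * m - t) / m = n - k := by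
    have h1 : n * m - t = m * (n - k) := by
      rw [hk, Nat.mul_sub, Nat.mul_comm n m]
    rw [h1, Nat.mul_div_cancel_left _ hm]
  -- distance facts
  obtain ⟨⟨A₀, hA₀C, hA₀ne, hA₀rank⟩, hdmin⟩ := hd
  obtain ⟨⟨B₀, hB₀C, hB₀ne, hB₀rank⟩, hdpmin⟩ := hdp
  have hd1 : 1 ≤ d := by
    rcases Nat.eq_zero_or_pos d with h | h
    · exact absurd (matrix_rank_zero (by rw [hA₀rank, h])) hA₀ne
    · exact h
  have hdn : d ≤ n := by
    rw [← hA₀rank]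
    simpa using Matrix.rank_le_card_height A₀
  have hdp1 : 1 ≤ dp := by
    rcases Nat.eq_zero_or_pos dp with h | h
    · exact absurd (matrix_rank_zero (by rw [hB₀rank, h])) hB₀ne
    · exact h
  have hdpn : dp ≤ n := by
    rw [← hB₀rank]
    simpa using Matrix.rank_le_card_height B₀
  -- finrank of the dual
  have hdualrank : finrank Fq (dualSub C) = n * m - t := by
    have := finrank_dualSub C
    omega
  -- Singleton bounds
  have hsingC : d ≤ n + 1 - k := by
    have hb := singleton_bound C hd1 hdn hdmin
    rw [ht, hk] at hb
    have : k ≤ n + 1 - d := by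
      rw [Nat.mul_comm m k] at hb
      exact Nat.le_of_mul_le_mul_right hb hm
    omega
  have hsingD : dp ≤ k + 1 := by
    have hb := singleton_bound (dualSub C) hdp1 hdpn hdpmin
    rw [hdualrank] at hb
    have h1 : n * m - t = (n - k) * m := by
      rw [hk, Nat.sub_mul, Nat.mul_comm m k]
    rw [h1] at hb
    have : n - k ≤ n + 1 - dp := Nat.le_of_mul_le_mul_right hb hm
    omega
  constructor
  · rintro ⟨h1, h2⟩
    rw [hkd] at h1
    rw [hco] at h2
    omega
  · intro hsum
    rw [hkd, hco]
    have hdge : n - k ≤ d := by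
      by_contra hlt
      push_neg at hlt
      have hdpk : dp = k + 1 := by omega
      have hAzero : A₀ = 0 := by
        refine dual_of_MRD (n - k) (by omega) (dualSub C) ?_ ?_ A₀ ?_ ?_
        · rw [hdualrank, hk, Nat.sub_mul, Nat.mul_comm m k]
        · intro B hB hBne
          have := hdpmin B hB hBne
          omega
        · intro B hB
          rw [traceForm_symm]
          exact hB A₀ hA₀C
        · rw [hA₀rank]; omega
      exact hA₀ne hAzero
    have hdle : d ≤ n - k := by
      by_contra hgt
      push_neg at hgt
      have hdeq : d = n + 1 - k := by omega
      have := hMRDfact (by rw [hkd]; omega)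
      rw [hco] at this
      omega
    constructor <;> omega
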